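/- arXiv:1305.5435 — 2 statements merged into one kernel-verified Lean document; each statement's English description precedes it below -/
import Mathlib

section
/- Let W(s) = (1/2)s²(1−s)². For every continuously differentiable function φ : ℝ → ℝ with lim_{t→−∞} φ(t) = 1 and lim_{t→+∞} φ(t) = 0, such that t ↦ (1/2)φ'(t)² + W(φ(t)) is integrable on ℝ, one has ∫_ℝ ((1/2)φ'(t)² + W(φ(t))) dt ≥ ∫₀¹ √(2W(s)) ds = 1/6. -/
open Filter Topology MeasureTheory

/-- Modica–Mortola lower bound for the one-dimensional transversal energy: for every
`C¹` function `φ` connecting `1` at `−∞` to `0` at `+∞` with integrable energy density,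
`∫_ℝ ((1/2)φ'² + W(φ)) ≥ ∫₀¹ √(2W(s)) ds = 1/6`, where `W(s) = (1/2)s²(1−s)²`. -/
theorem transversal_energy_lower_bound (W : ℝ → ℝ)
    (hW : W = fun s => (1 / 2) * s ^ 2 * (1 - s) ^ 2)
    (φ : ℝ → ℝ) (hφ : ContDiff ℝ 1 φ)
    (hbot : Tendsto φ atBot (𝓝 1)) (htop : Tendsto φ atTop (𝓝 0))
    (hint : Integrable (fun t => (1 / 2) * (deriv φ t) ^ 2 + W (φ t))) :
    ((∫ t : ℝ, ((1 / 2) * (deriv φ t) ^ 2 + W (φ t))) ≥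
        ∫ s in (0 : ℝ)..1, Real.sqrt (2 * W s)) ∧
      (∫ s in (0 : ℝ)..1, Real.sqrt (2 * W s)) = 1 / 6 := by
  set g : ℝ → ℝ := fun s => |s * (1 - s)| with hgdef
  have hgc : Continuous g := (continuous_id.mul (continuous_const.sub continuous_id)).abs
  set G : ℝ → ℝ := fun x => ∫ s in (0:ℝ)..x, g s with hGdef
  have hG : ∀ x, HasDerivAt G (g x) x := fun x =>
    (hgc.integral_hasStrictDerivAt 0 x).hasDerivAt
  have hGc : Continuous G :=
    continuous_iff_continuousAt.2 fun x => (hG x).continuousAt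
  have hsqrt : ∀ s, Real.sqrt (2 * W s) = g s := by
    intro s
    rw [hW]
    have h2 : 2 * ((1/2 : ℝ) * s ^ 2 * (1 - s) ^ 2) = (s * (1 - s)) ^ 2 := by ring
    simp only
    rw [h2, Real.sqrt_sq_eq_abs]
  have hval : (∫ s in (0:ℝ)..1, Real.sqrt (2 * W s)) = 1 / 6 := by
    simp_rw [hsqrt]
    rw [intervalIntegral.integral_congr (g := fun s => s - s ^ 2)]
    · have hi1 : IntervalIntegrable (fun x : ℝ => x) volume 0 1 :=
        continuous_id.intervalIntegrable 0 1
      have hi2 : IntervalIntegrable (fun x : ℝ => x ^ 2) volume 0 1 :=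
        (continuous_pow 2).intervalIntegrable 0 1
      rw [intervalIntegral.integral_sub hi1 hi2]
      simp [integral_id, integral_pow]
      norm_num
    · intro s hs
      rw [Set.uIcc_of_le (by norm_num : (0:ℝ) ≤ 1)] at hs
      have h0 : 0 ≤ s := hs.1
      have h1 : s ≤ 1 := hs.2
      have : 0 ≤ s * (1 - s) := mul_nonneg h0 (by linarith)
      simp only [hgdef]
      rw [abs_of_nonneg this]; ring
  have hG1 : G 1 = 1 / 6 := by
    rw [hGdef]
    simp only
    rw [← hval]
    exact (intervalIntegral.integral_congr fun s _ => (hsqrt s)).symm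
  have hG0 : G 0 = 0 := by simp [hGdef]
  have hφc : Continuous φ := hφ.continuous
  have hφ'c : Continuous (deriv φ) := hφ.continuous_deriv le_rfl
  set E : ℝ → ℝ := fun t => (1 / 2) * (deriv φ t) ^ 2 + W (φ t) with hEdef
  have hE0 : ∀ t, 0 ≤ E t := by
    intro t
    simp only [hEdef, hW]
    positivity
  have hbound : ∀ t, |g (φ t) * deriv φ t| ≤ E t := by
    intro t
    simp only [hEdef, hW, hgdef, abs_mul, abs_abs]
    rw [← abs_mul]
    set a := deriv φ t
    set b := φ t
    have h1 : |b * (1 - b)| * |a| ≤ (1/2) * a ^ 2 + (1/2) * (b * (1-b)) ^ 2 := by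
      nlinarith [sq_nonneg (|a| - |b * (1 - b)|), sq_abs a, sq_abs (b * (1 - b))]
    calc |b * (1 - b)| * |a| ≤ (1/2) * a ^ 2 + (1/2) * (b * (1-b)) ^ 2 := h1
      _ = 1/2 * a ^ 2 + 1/2 * b ^ 2 * (1 - b) ^ 2 := by ring
  have hchain : ∀ t, HasDerivAt (fun u => G (φ u)) (g (φ t) * deriv φ t) t := by
    intro t
    exact (hG (φ t)).comp t ((hφ.differentiable one_ne_zero t).hasDerivAt)
  have hcont : Continuous fun t => g (φ t) * deriv φ t := (hgc.comp hφc).mul hφ'c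
  have hFTC : ∀ a b : ℝ, ∫ t in a..b, g (φ t) * deriv φ t = G (φ b) - G (φ a) := by
    intro a b
    exact intervalIntegral.integral_eq_sub_of_hasDerivAt (fun t _ => hchain t)
      (hcont.intervalIntegrable _ _)
  have key : ∀ n : ℕ, |G (φ n) - G (φ (-(n:ℝ)))| ≤ ∫ t, E t := by
    intro n
    rw [← hFTC]
    have hab : (-(n:ℝ)) ≤ n := by
      have : (0:ℝ) ≤ n := n.cast_nonneg
      linarith
    calc |∫ t in (-(n:ℝ))..n, g (φ t) * deriv φ t|
        ≤ ∫ t in (-(n:ℝ))..n, |g (φ t) * deriv φ t| :=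
          intervalIntegral.abs_integral_le_integral_abs hab
      _ ≤ ∫ t in (-(n:ℝ))..n, E t := by
          apply intervalIntegral.integral_mono_on hab (hcont.abs.intervalIntegrable _ _)
            hint.intervalIntegrable
          intro t _
          exact hbound t
      _ = ∫ t in Set.Ioc (-(n:ℝ)) n, E t := intervalIntegral.integral_of_le hab
      _ ≤ ∫ t, E t := setIntegral_le_integral hint (ae_of_all _ hE0)
  have htop' : Tendsto (fun n : ℕ => φ n) atTop (𝓝 0) :=
    htop.comp tendsto_natCast_atTop_atTop
  have hbot' : Tendsto (fun n : ℕ => φ (-(n:ℝ))) atTop (𝓝 1) :=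
    hbot.comp (tendsto_neg_atTop_atBot.comp tendsto_natCast_atTop_atTop)
  have hlim : Tendsto (fun n : ℕ => |G (φ n) - G (φ (-(n:ℝ)))|) atTop (𝓝 |G 0 - G 1|) :=
    (continuous_abs.tendsto _).comp
      (((hGc.tendsto 0).comp htop').sub ((hGc.tendsto 1).comp hbot'))
  have hge : |G 0 - G 1| ≤ ∫ t, E t := le_of_tendsto hlim (Filter.Eventually.of_forall key)
  rw [hG0, hG1] at hge
  refine ⟨?_, hval⟩
  rw [hval]
  rw [abs_sub_comm, sub_zero, abs_of_nonneg (by norm_num : (0:ℝ) ≤ 1/6)] at hge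
  exact hge
end

section
/- Let W : ℝ → ℝ be three times continuously differentiable, let q : ℝ → ℝ be three times continuously differentiable with q''(z) = W'(q(z)) for all z (hence q''' = W''(q)q'), and let η₁ : ℝ → ℝ be three times continuously differentiable with η₁''(z) − W''(q(z))η₁(z) = z q'(z) for all z. Assume: q' is square-integrable; η₁''(z)q'(z) − η₁'(z)q''(z) → 0 and z q'(z)² → 0 as z → ±∞; and the functions W'''(q)η₁(q')², η₁'''q', η₁'q''', and (zq')'q' are integrable on ℝ. Then ∫_ℝ W'''(q(z)) η₁(z) q'(z)² dz = −(1/2) ∫_ℝ q'(z)² dz. -/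
open Filter Topology MeasureTheory

/-- Key integral identity in the matched asymptotic expansions: if `q'' = W'(q)` and
`η₁'' − W''(q) η₁ = z q'` with the stated decay and integrability assumptions, then
`∫_ℝ W'''(q) η₁ q'² = −(1/2)∫_ℝ q'²`. -/
theorem int_Wppp_eta1 (W q η₁ : ℝ → ℝ)
    (hW : ContDiff ℝ 3 W) (hq : ContDiff ℝ 3 q)
    (hqeq : ∀ z : ℝ, deriv (deriv q) z = deriv W (q z))
    (hη : ContDiff ℝ 3 η₁)
    (hηeq : ∀ z : ℝ, deriv (deriv η₁) z - deriv (deriv W) (q z) * η₁ z = z * deriv q z)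
    (hsq : Integrable (fun z => (deriv q z) ^ 2))
    (hbtop : Tendsto (fun z => deriv (deriv η₁) z * deriv q z
      - deriv η₁ z * deriv (deriv q) z) atTop (𝓝 0))
    (hbbot : Tendsto (fun z => deriv (deriv η₁) z * deriv q z
      - deriv η₁ z * deriv (deriv q) z) atBot (𝓝 0))
    (hztop : Tendsto (fun z => z * (deriv q z) ^ 2) atTop (𝓝 0))
    (hzbot : Tendsto (fun z => z * (deriv q z) ^ 2) atBot (𝓝 0))
    (hint₁ : Integrable (fun z => deriv (deriv (deriv W)) (q z) * η₁ z * (deriv q z) ^ 2))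
    (hint₂ : Integrable (fun z => deriv (deriv (deriv η₁)) z * deriv q z))
    (hint₃ : Integrable (fun z => deriv η₁ z * deriv (deriv (deriv q)) z))
    (hint₄ : Integrable (fun z => deriv (fun y => y * deriv q y) z * deriv q z)) :
    (∫ z : ℝ, deriv (deriv (deriv W)) (q z) * η₁ z * (deriv q z) ^ 2) =
      -(1 / 2) * ∫ z : ℝ, (deriv q z) ^ 2 := by
  -- basic differentiability facts
  have hq1 : ContDiff ℝ 2 (deriv q) :=
    (contDiff_succ_iff_deriv.mp (by exact_mod_cast hq : ContDiff ℝ (2+1) q)).2.2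
  have hq2 : ContDiff ℝ 1 (deriv (deriv q)) :=
    (contDiff_succ_iff_deriv.mp (by exact_mod_cast hq1 : ContDiff ℝ (1+1) (deriv q))).2.2
  have hη1 : ContDiff ℝ 2 (deriv η₁) :=
    (contDiff_succ_iff_deriv.mp (by exact_mod_cast hη : ContDiff ℝ (2+1) η₁)).2.2
  have hη2 : ContDiff ℝ 1 (deriv (deriv η₁)) :=
    (contDiff_succ_iff_deriv.mp (by exact_mod_cast hη1 : ContDiff ℝ (1+1) (deriv η₁))).2.2
  have hW1 : ContDiff ℝ 2 (deriv W) :=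
    (contDiff_succ_iff_deriv.mp (by exact_mod_cast hW : ContDiff ℝ (2+1) W)).2.2
  have hW2 : ContDiff ℝ 1 (deriv (deriv W)) :=
    (contDiff_succ_iff_deriv.mp (by exact_mod_cast hW1 : ContDiff ℝ (1+1) (deriv W))).2.2
  have hdq : ∀ z, HasDerivAt q (deriv q z) z :=
    fun z => ((hq.differentiable (by norm_num)) z).hasDerivAt
  have hdq' : ∀ z, HasDerivAt (deriv q) (deriv (deriv q) z) z :=
    fun z => ((hq1.differentiable (by norm_num)) z).hasDerivAt
  have hdq'' : ∀ z, HasDerivAt (deriv (deriv q)) (deriv (deriv (deriv q)) z) z :=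
    fun z => ((hq2.differentiable (by norm_num)) z).hasDerivAt
  have hdη : ∀ z, HasDerivAt η₁ (deriv η₁ z) z :=
    fun z => ((hη.differentiable (by norm_num)) z).hasDerivAt
  have hdη' : ∀ z, HasDerivAt (deriv η₁) (deriv (deriv η₁) z) z :=
    fun z => ((hη1.differentiable (by norm_num)) z).hasDerivAt
  have hdη'' : ∀ z, HasDerivAt (deriv (deriv η₁)) (deriv (deriv (deriv η₁)) z) z :=
    fun z => ((hη2.differentiable (by norm_num)) z).hasDerivAt
  have hdW' : ∀ x, HasDerivAt (deriv W) (deriv (deriv W) x) x :=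
    fun x => ((hW1.differentiable (by norm_num)) x).hasDerivAt
  have hdW'' : ∀ x, HasDerivAt (deriv (deriv W)) (deriv (deriv (deriv W)) x) x :=
    fun x => ((hW2.differentiable (by norm_num)) x).hasDerivAt
  -- third derivative of q : q''' = W''(q) q'
  have E1 : ∀ z, deriv (deriv (deriv q)) z = deriv (deriv W) (q z) * deriv q z := by
    intro z
    have hfun : deriv (deriv q) = fun z => deriv W (q z) := funext hqeq
    rw [hfun]
    exact ((hdW' (q z)).comp z (hdq z)).deriv
  -- third derivative of η₁
  have E2 : ∀ z, deriv (deriv (deriv η₁)) z =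
      deriv (deriv (deriv W)) (q z) * deriv q z * η₁ z
        + deriv (deriv W) (q z) * deriv η₁ z + (1 * deriv q z + z * deriv (deriv q) z) := by
    intro z
    have hfun : deriv (deriv η₁) = fun z => deriv (deriv W) (q z) * η₁ z + z * deriv q z :=
      funext fun z => by linarith [hηeq z]
    rw [hfun]
    exact ((((hdW'' (q z)).comp z (hdq z)).mul (hdη z)).add
      ((hasDerivAt_id z).mul (hdq' z))).deriv
  -- derivative of the boundary term F₁
  have hF1 : ∀ z, HasDerivAt (fun z => deriv (deriv η₁) z * deriv q z
      - deriv η₁ z * deriv (deriv q) z)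
      (deriv (deriv (deriv η₁)) z * deriv q z - deriv η₁ z * deriv (deriv (deriv q)) z) z := by
    intro z
    have h := ((hdη'' z).mul (hdq' z)).sub ((hdη' z).mul (hdq'' z))
    exact h.congr_deriv (by ring)
  -- derivative of the boundary term F₂ = z q'^2
  have hF2 : ∀ z, HasDerivAt (fun z => z * (deriv q z) ^ 2)
      ((deriv q z) ^ 2 + z * (2 * deriv q z * deriv (deriv q) z)) z := by
    intro z
    have h := (hasDerivAt_id z).mul ((hdq' z).pow 2)
    exact h.congr_deriv (by norm_num)
  -- integrability of the two total derivatives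
  have hintF1 : Integrable (fun z => deriv (deriv (deriv η₁)) z * deriv q z
      - deriv η₁ z * deriv (deriv (deriv q)) z) := hint₂.sub hint₃
  have hintF2 : Integrable (fun z => (deriv q z) ^ 2 + z * (2 * deriv q z * deriv (deriv q) z)) := by
    have hfun : (fun z => (deriv q z) ^ 2 + z * (2 * deriv q z * deriv (deriv q) z))
        = fun z => 2 * (deriv (fun y => y * deriv q y) z * deriv q z) - (deriv q z) ^ 2 := by
      funext z
      have hd : deriv (fun y => y * deriv q y) z = 1 * deriv q z + z * deriv (deriv q) z :=
        ((hasDerivAt_id z).mul (hdq' z)).deriv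
      rw [hd]; ring
    rw [hfun]
    exact (hint₄.const_mul 2).sub hsq
  -- the two total derivatives integrate to zero
  have hI1 : (∫ z : ℝ, (deriv (deriv (deriv η₁)) z * deriv q z
      - deriv η₁ z * deriv (deriv (deriv q)) z)) = 0 := by
    rw [integral_of_hasDerivAt_of_tendsto hF1 hintF1 hbbot hbtop]; ring
  have hI2 : (∫ z : ℝ, ((deriv q z) ^ 2 + z * (2 * deriv q z * deriv (deriv q) z))) = 0 := by
    rw [integral_of_hasDerivAt_of_tendsto hF2 hintF2 hzbot hztop]; ring
  -- the pointwise key identity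
  have hkey : (fun z => deriv (deriv (deriv W)) (q z) * η₁ z * (deriv q z) ^ 2)
      = fun z => (deriv (deriv (deriv η₁)) z * deriv q z
          - deriv η₁ z * deriv (deriv (deriv q)) z)
        - (1 / 2) * (deriv q z) ^ 2
        - (1 / 2) * ((deriv q z) ^ 2 + z * (2 * deriv q z * deriv (deriv q) z)) := by
    funext z
    rw [E1 z, E2 z]
    ring
  have hint5 : Integrable (fun z => (deriv (deriv (deriv η₁)) z * deriv q z
      - deriv η₁ z * deriv (deriv (deriv q)) z) - (1 / 2) * (deriv q z) ^ 2) :=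
    hintF1.sub (hsq.const_mul (1/2))
  rw [hkey, integral_sub hint5 (hintF2.const_mul (1/2)),
    integral_sub hintF1 (hsq.const_mul (1/2)), integral_const_mul, integral_const_mul, hI1, hI2]
  ring
end
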